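/- For the line graph algebra L_n, evaluating the Hilbert series at t = 1/2 yields H_{L_n}(1/2) = F_{n+2}, where F_k denotes the Fibonacci numbers with F_0 = F_1 = 1. -/

import Mathlib

open PowerSeries

/-- The dimension of the `i`-th graded piece of `k[x]/I`. -/
noncomputable def hilbertCoeff {k : Type} [Field k] {σ : Type} (I : Ideal (MvPolynomial σ k))
    (i : ℕ) : ℕ :=
  Module.finrank k
    ((MvPolynomial.homogeneousSubmodule σ k i).map (Ideal.Quotient.mkₐ k I).toLinearMap)

/-- The Hilbert series of `k[x]/I`, as a formal power series with rational coefficients. -/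
noncomputable def hilbertSeries {k : Type} [Field k] {σ : Type} (I : Ideal (MvPolynomial σ k)) :
    PowerSeries ℚ :=
  PowerSeries.mk fun i => (hilbertCoeff I i : ℚ)

/-- The edge ideal of a graph. -/
noncomputable def edgeIdeal (k : Type) [Field k] {V : Type} (G : SimpleGraph V) : Ideal (MvPolynomial V k) :=
  Ideal.span {m | ∃ a b, G.Adj a b ∧ m = MvPolynomial.X a * MvPolynomial.X b}

/-- The line graph on `n+1` vertices, with edges `{i, i+1}` for `0 ≤ i < n`. -/
def lineGraph (n : ℕ) : SimpleGraph (Fin (n + 1)) :=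
  SimpleGraph.fromRel fun i j => (i : ℕ) + 1 = (j : ℕ)

/-- The cycle graph on `n` vertices, with edges `{i, i+1 mod n}`. -/
def cycleGraph (n : ℕ) : SimpleGraph (Fin n) :=
  SimpleGraph.fromRel fun i j => ((i : ℕ) + 1) % n = (j : ℕ)

/-- The Hilbert series of the line graph algebra `L_n = k[x_1,…,x_{n+1}]/(x_1x_2,…,x_nx_{n+1})`. -/
noncomputable def lineSeries (k : Type) [Field k] (n : ℕ) : PowerSeries ℚ :=
  hilbertSeries (edgeIdeal k (lineGraph n))

/-- The Hilbert series of the cycle graph algebra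
`C_n = k[x_1,…,x_n]/(x_1x_2,…,x_{n-1}x_n,x_nx_1)`. -/
noncomputable def cycleSeries (k : Type) [Field k] (n : ℕ) : PowerSeries ℚ :=
  hilbertSeries (edgeIdeal k (cycleGraph n))


/-! ### Auxiliary combinatorics -/

open ENNReal MvPolynomial

def IsGood {m : ℕ} (f : Fin m → ℕ) : Prop :=
  ∀ i j : Fin m, (i : ℕ) + 1 = (j : ℕ) → f i = 0 ∨ f j = 0

instance {m : ℕ} (f : Fin m → ℕ) : Decidable (IsGood f) := by
  unfold IsGood; infer_instance

def goodSet (m i : ℕ) : Finset (Fin m → ℕ) :=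
  (Finset.Nat.antidiagonalTuple m i).filter IsGood

noncomputable def wt {m : ℕ} (f : Fin m → ℕ) : ℝ≥0∞ := ∏ j, (2⁻¹ : ℝ≥0∞) ^ (f j)

noncomputable def gsum (m : ℕ) : ℝ≥0∞ := ∑' f : {f : Fin m → ℕ // IsGood f}, wt f.1

lemma wt_snoc {m : ℕ} (f : Fin m → ℕ) (x : ℕ) :
    wt (Fin.snoc f x : Fin (m+1) → ℕ) = wt f * 2⁻¹ ^ x := by
  unfold wt
  rw [Fin.prod_univ_castSucc]
  simp [Fin.snoc_castSucc, Fin.snoc_last]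

lemma isGood_snoc_zero {m : ℕ} {f : Fin m → ℕ} (hf : IsGood f) :
    IsGood (Fin.snoc f 0 : Fin (m+1) → ℕ) := by
  intro i j hij
  rcases eq_or_lt_of_le (Nat.lt_succ_iff.mp j.2) with hj | hj
  · right
    have : j = Fin.last m := Fin.ext hj
    simp [this]
  · have hi : (i : ℕ) < m := by omega
    have hi' : i = Fin.castSucc ⟨i, hi⟩ := rfl
    have hj' : j = Fin.castSucc ⟨j, hj⟩ := rfl
    rw [hi', hj', Fin.snoc_castSucc, Fin.snoc_castSucc]
    exact hf _ _ hij

lemma isGood_snoc_pos {m : ℕ} {f : Fin m → ℕ} (hf : IsGood f) (x : ℕ) :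
    IsGood (Fin.snoc (Fin.snoc f 0 : Fin (m+1) → ℕ) x : Fin (m+2) → ℕ) := by
  intro i j hij
  rcases eq_or_lt_of_le (Nat.lt_succ_iff.mp j.2) with hj | hj
  · left
    have hi : i = Fin.castSucc (Fin.last m) := Fin.ext (by simpa using by omega)
    rw [hi, Fin.snoc_castSucc, Fin.snoc_last]
  · have hi : (i : ℕ) < m + 1 := by omega
    have hi' : i = Fin.castSucc ⟨i, hi⟩ := rfl
    have hj' : j = Fin.castSucc ⟨j, hj⟩ := rfl
    rw [hi', hj', Fin.snoc_castSucc, Fin.snoc_castSucc]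
    rcases eq_or_lt_of_le (Nat.lt_succ_iff.mp hj) with hj2 | hj2
    · right
      have : (⟨j, hj⟩ : Fin (m+1)) = Fin.last m := Fin.ext hj2
      simp [this]
    · have hi2 : (i : ℕ) < m := by omega
      have hi2' : (⟨i, hi⟩ : Fin (m+1)) = Fin.castSucc ⟨i, hi2⟩ := rfl
      have hj2' : (⟨j, hj⟩ : Fin (m+1)) = Fin.castSucc ⟨j, hj2⟩ := rfl
      rw [hi2', hj2', Fin.snoc_castSucc, Fin.snoc_castSucc]
      exact hf _ _ hij

lemma isGood_init {m : ℕ} {f : Fin (m+1) → ℕ} (hf : IsGood f) : IsGood (Fin.init f) := by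
  intro i j hij
  exact hf i.castSucc j.castSucc (by simpa using hij)

lemma isGood_last_pos {m : ℕ} {f : Fin (m+2) → ℕ} (hf : IsGood f)
    (hx : f (Fin.last (m+1)) ≠ 0) : f ((Fin.last m).castSucc) = 0 := by
  rcases hf ((Fin.last m).castSucc) (Fin.last (m+1)) (by simp) with h | h
  · exact h
  · exact absurd h hx
def zeroEquiv (m : ℕ) :
    {g : {f : Fin (m+2) → ℕ // IsGood f} // g.1 (Fin.last (m+1)) = 0} ≃
      {f : Fin (m+1) → ℕ // IsGood f} where
  toFun g := ⟨Fin.init g.1.1, isGood_init g.1.2⟩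
  invFun h := ⟨⟨Fin.snoc h.1 0, isGood_snoc_zero h.2⟩, by simp⟩
  left_inv g := by
    apply Subtype.ext; apply Subtype.ext
    have h0 := Fin.snoc_init_self g.1.1
    rw [g.2] at h0
    exact h0
  right_inv h := by
    apply Subtype.ext
    show Fin.init (Fin.snoc h.1 0 : Fin (m+2) → ℕ) = h.1
    funext i
    simp [Fin.init]

def posEquiv (m : ℕ) :
    {g : {f : Fin (m+2) → ℕ // IsGood f} // ¬ g.1 (Fin.last (m+1)) = 0} ≃
      ({f : Fin m → ℕ // IsGood f} × ℕ) where
  toFun g := (⟨Fin.init (Fin.init g.1.1), isGood_init (isGood_init g.1.2)⟩,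
      g.1.1 (Fin.last (m+1)) - 1)
  invFun p := ⟨⟨Fin.snoc (Fin.snoc p.1.1 0) (p.2 + 1), isGood_snoc_pos p.1.2 _⟩, by simp⟩
  left_inv g := by
    apply Subtype.ext; apply Subtype.ext
    have h1 : g.1.1 (Fin.last (m+1)) - 1 + 1 = g.1.1 (Fin.last (m+1)) :=
      Nat.succ_pred_eq_of_pos (Nat.pos_of_ne_zero g.2)
    show Fin.snoc (Fin.snoc (Fin.init (Fin.init g.1.1)) 0) (g.1.1 (Fin.last (m+1)) - 1 + 1)
      = g.1.1
    rw [h1]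
    have h2 : Fin.init g.1.1 ((Fin.last m)) = 0 := by
      have := isGood_last_pos g.1.2 g.2
      simpa [Fin.init] using this
    have h3 := Fin.snoc_init_self (Fin.init g.1.1)
    rw [h2] at h3
    rw [h3]
    exact Fin.snoc_init_self g.1.1
  right_inv p := by
    refine Prod.ext (Subtype.ext ?_) ?_
    · simp [Fin.init_snoc]
    · simp

lemma tsum_geom_succ : ∑' e : ℕ, (2⁻¹ : ℝ≥0∞) ^ (e + 1) = 1 := by
  rw [ENNReal.tsum_geometric_add_one, ENNReal.one_sub_inv_two]
  simp [ENNReal.inv_mul_cancel]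

lemma gsum_rec (m : ℕ) : gsum (m+2) = gsum (m+1) + gsum m := by
  classical
  have hsplit := (Summable.tsum_add_tsum_compl
    (f := fun f : {f : Fin (m+2) → ℕ // IsGood f} => wt f.1)
    (s := {g | g.1 (Fin.last (m+1)) = 0}) ENNReal.summable ENNReal.summable).symm
  rw [gsum, hsplit]
  congr 1
  · have e := Equiv.tsum_eq (zeroEquiv m).symm
      (fun g : {g : {f : Fin (m+2) → ℕ // IsGood f} // g.1 (Fin.last (m+1)) = 0} => wt g.1.1)
    refine Eq.trans
      (b := ∑' h : {f : Fin (m+1) → ℕ // IsGood f}, wt ((zeroEquiv m).symm h).1.1) ?_ ?_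
    · exact e.symm
    · refine (tsum_congr fun h => ?_).trans (by rw [gsum])
      show wt (Fin.snoc h.1 0 : Fin (m+2) → ℕ) = wt h.1
      rw [wt_snoc]; simp
  · have e := Equiv.tsum_eq (posEquiv m).symm
      (fun g : {g : {f : Fin (m+2) → ℕ // IsGood f} // ¬ g.1 (Fin.last (m+1)) = 0} => wt g.1.1)
    refine Eq.trans
      (b := ∑' p : {f : Fin m → ℕ // IsGood f} × ℕ, wt ((posEquiv m).symm p).1.1) ?_ ?_
    · exact e.symm
    have : ∀ p : {f : Fin m → ℕ // IsGood f} × ℕ,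
        wt ((posEquiv m).symm p).1.1 = wt p.1.1 * 2⁻¹ ^ (p.2 + 1) := by
      intro p
      show wt (Fin.snoc (Fin.snoc p.1.1 0) (p.2+1) : Fin (m+2) → ℕ) = _
      rw [wt_snoc, wt_snoc]; simp
    rw [tsum_congr this, ENNReal.tsum_prod']
    calc ∑' (a : {f : Fin m → ℕ // IsGood f}) (e : ℕ), wt a.1 * 2⁻¹ ^ (e+1)
        = ∑' (a : {f : Fin m → ℕ // IsGood f}), wt a.1 * ∑' e : ℕ, (2⁻¹:ℝ≥0∞) ^ (e+1) := by
          refine tsum_congr fun a => ?_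
          rw [ENNReal.tsum_mul_left]
      _ = gsum m := by rw [tsum_geom_succ]; simp [gsum]

lemma gsum_zero : gsum 0 = 1 := by
  have hu : ∀ f : {f : Fin 0 → ℕ // IsGood f}, f = ⟨finZeroElim, fun i => i.elim0⟩ := by
    intro f; apply Subtype.ext; funext i; exact i.elim0
  haveI : Unique {f : Fin 0 → ℕ // IsGood f} :=
    ⟨⟨⟨finZeroElim, fun i => i.elim0⟩⟩, hu⟩
  rw [gsum, tsum_eq_single default (fun b hb => absurd ((hu b).trans (hu default).symm) hb)]
  · simp [wt]

def oneEquiv : {f : Fin 1 → ℕ // IsGood f} ≃ ℕ where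
  toFun f := f.1 0
  invFun x := ⟨fun _ => x, fun i j h => by omega⟩
  left_inv f := by
    apply Subtype.ext; funext i
    have : i = 0 := Subsingleton.elim _ _
    rw [this]
  right_inv x := rfl

lemma gsum_one : gsum 1 = 2 := by
  rw [gsum, ← Equiv.tsum_eq oneEquiv.symm (fun f => _)]
  have : ∀ x : ℕ, wt ((oneEquiv.symm x).1) = (2⁻¹ : ℝ≥0∞) ^ x := by
    intro x; rw [wt, Fin.prod_univ_one]; rfl
  rw [tsum_congr this, ENNReal.tsum_geometric, ENNReal.one_sub_inv_two]
  simp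

lemma gsum_eq_fib : ∀ m : ℕ, gsum m = (Nat.fib (m+2) : ℝ≥0∞) := by
  have key : ∀ m : ℕ, gsum m = (Nat.fib (m+2) : ℝ≥0∞) ∧
      gsum (m+1) = (Nat.fib (m+3) : ℝ≥0∞) := by
    intro m
    induction m with
    | zero => exact ⟨by rw [gsum_zero]; norm_num, by rw [gsum_one]; norm_num⟩
    | succ p ih =>
      refine ⟨ih.2, ?_⟩
      show gsum (p+2) = (Nat.fib (p+4) : ℝ≥0∞)
      have hfib : (Nat.fib (p+4) : ℝ≥0∞) = (Nat.fib (p+3) : ℝ≥0∞) + (Nat.fib (p+2) : ℝ≥0∞) := by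
        rw [show p+4 = (p+2)+2 from rfl, Nat.fib_add_two, Nat.cast_add]
        exact add_comm _ _
      rw [gsum_rec, ih.1, ih.2, hfib]
  exact fun m => (key m).1

def sigmaEquiv (m : ℕ) : (Σ i : ℕ, {f : Fin m → ℕ // f ∈ goodSet m i}) ≃
    {f : Fin m → ℕ // IsGood f} where
  toFun x := ⟨x.2.1, by
    have := x.2.2
    simp only [goodSet, Finset.mem_filter] at this
    exact this.2⟩
  invFun f := ⟨∑ j, f.1 j, ⟨f.1, by
    refine Finset.mem_filter.mpr ⟨?_, f.2⟩
    rw [Finset.Nat.mem_antidiagonalTuple]⟩⟩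
  left_inv x := by
    obtain ⟨i, f, hf⟩ := x
    have : ∑ j, f j = i := by
      have := hf
      simp only [goodSet, Finset.mem_filter, Finset.Nat.mem_antidiagonalTuple] at this
      exact this.1
    exact Sigma.ext this (by subst this; rfl)
  right_inv f := rfl

lemma wt_of_mem {m i : ℕ} {f : Fin m → ℕ} (hf : f ∈ goodSet m i) :
    wt f = (2⁻¹ : ℝ≥0∞) ^ i := by
  have : ∑ j, f j = i := by
    simpa [goodSet, Finset.Nat.mem_antidiagonalTuple] using
      (Finset.mem_filter.mp hf).1
  rw [wt, Finset.prod_pow_eq_pow_sum, this]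

lemma tsum_card_eq_gsum (m : ℕ) :
    ∑' i : ℕ, ((goodSet m i).card : ℝ≥0∞) * 2⁻¹ ^ i = gsum m := by
  have h1 : ∀ i : ℕ, ((goodSet m i).card : ℝ≥0∞) * 2⁻¹ ^ i
      = ∑' f : {f : Fin m → ℕ // f ∈ goodSet m i}, wt f.1 := by
    intro i
    rw [Finset.tsum_subtype (goodSet m i) (fun f => wt f)]
    rw [Finset.sum_congr rfl (fun f hf => wt_of_mem hf), Finset.sum_const, nsmul_eq_mul]
  rw [tsum_congr h1, ← ENNReal.tsum_sigma, gsum,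
    ← Equiv.tsum_eq (sigmaEquiv m) (fun f => wt f.1)]
  rfl

variable {k : Type} [Field k]

lemma lineGraph_adj {n : ℕ} (a b : Fin (n+1)) :
    (lineGraph n).Adj a b ↔ ((a:ℕ)+1 = b ∨ (b:ℕ)+1 = a) := by
  rw [lineGraph, SimpleGraph.fromRel_adj]
  constructor
  · exact fun h => h.2
  · intro h
    refine ⟨?_, h⟩
    intro he
    subst he
    omega

def edgeExps (n : ℕ) : Set (Fin (n+1) →₀ ℕ) :=
  {d | ∃ a b, (lineGraph n).Adj a b ∧ d = Finsupp.single a 1 + Finsupp.single b 1}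

lemma edgeIdeal_eq (n : ℕ) :
    edgeIdeal k (lineGraph n) =
      Ideal.span ((fun d => MvPolynomial.monomial d (1:k)) '' edgeExps n) := by
  rw [edgeIdeal]
  congr 1
  ext m
  constructor
  · rintro ⟨a, b, hab, rfl⟩
    exact ⟨_, ⟨a, b, hab, rfl⟩, by rw [MvPolynomial.X, MvPolynomial.X, monomial_mul, one_mul]⟩
  · rintro ⟨d, ⟨a, b, hab, rfl⟩, rfl⟩
    exact ⟨a, b, hab, by rw [MvPolynomial.X, MvPolynomial.X, monomial_mul, one_mul]⟩

lemma bad_iff {n : ℕ} (d : Fin (n+1) →₀ ℕ) :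
    (∃ si ∈ edgeExps n, si ≤ d) ↔ ¬ IsGood (⇑d) := by
  constructor
  · rintro ⟨si, ⟨a, b, hab, rfl⟩, hle⟩ hg
    have hne : a ≠ b := hab.ne
    have ha : 1 ≤ d a := by
      have := (Finsupp.le_def.mp hle) a
      rwa [Finsupp.add_apply, Finsupp.single_eq_same,
        Finsupp.single_eq_of_ne' hne.symm, add_zero] at this
    have hb : 1 ≤ d b := by
      have := (Finsupp.le_def.mp hle) b
      rwa [Finsupp.add_apply, Finsupp.single_eq_same,
        Finsupp.single_eq_of_ne' hne, zero_add] at this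
    rw [lineGraph_adj] at hab
    rcases hab with h | h
    · rcases hg a b h with h0 | h0 <;> omega
    · rcases hg b a h with h0 | h0 <;> omega
  · intro hg
    rw [IsGood] at hg
    push_neg at hg
    obtain ⟨i, j, hij, hi, hj⟩ := hg
    refine ⟨Finsupp.single i 1 + Finsupp.single j 1,
      ⟨i, j, (lineGraph_adj i j).mpr (Or.inl hij), rfl⟩, ?_⟩
    rw [Finsupp.le_def]
    intro x
    rw [Finsupp.add_apply, Finsupp.single_apply, Finsupp.single_apply]
    have hne : i ≠ j := by
      intro h
      rw [h] at hij
      omega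
    rcases eq_or_ne i x with rfl | h1
    · rw [if_pos rfl, if_neg (show j ≠ i by intro h; rw [h] at hij; omega), add_zero]
      omega
    · rw [if_neg h1, zero_add]
      rcases eq_or_ne j x with rfl | h2
      · rw [if_pos rfl]
        omega
      · rw [if_neg h2]
        exact Nat.zero_le _

lemma mem_edgeIdeal_iff {n : ℕ} (p : MvPolynomial (Fin (n+1)) k) :
    p ∈ edgeIdeal k (lineGraph n) ↔ ∀ d ∈ p.support, ¬ IsGood (⇑d) := by
  rw [edgeIdeal_eq, mem_ideal_span_monomial_image]
  exact forall₂_congr fun d _ => bad_iff d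

lemma degree_eq_sum_univ {m : ℕ} (d : Fin m →₀ ℕ) : d.degree = ∑ j, d j := by
  rw [Finsupp.degree]
  exact Finset.sum_subset (Finset.subset_univ _)
    (fun x _ hx => Finsupp.notMem_support_iff.mp hx)

lemma mem_goodSet_iff {n i : ℕ} (d : Fin (n+1) →₀ ℕ) :
    ⇑d ∈ goodSet (n+1) i ↔ d.degree = i ∧ IsGood ⇑d := by
  rw [goodSet, Finset.mem_filter, Finset.Nat.mem_antidiagonalTuple, degree_eq_sum_univ]

lemma hilbertCoeff_eq (n i : ℕ) :
    hilbertCoeff (edgeIdeal k (lineGraph n)) i = (goodSet (n+1) i).card := by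
  classical
  set I := edgeIdeal k (lineGraph n) with hI
  set φ := (Ideal.Quotient.mkₐ k I).toLinearMap with hφ
  set v : {f : Fin (n+1) → ℕ // f ∈ goodSet (n+1) i} → (MvPolynomial (Fin (n+1)) k ⧸ I) :=
    fun f => Ideal.Quotient.mk I (monomial (Finsupp.equivFunOnFinite.symm f.1) (1:k)) with hv
  have hcoe : ∀ f : Fin (n+1) → ℕ, ⇑(Finsupp.equivFunOnFinite.symm f) = f := fun f => rfl
  have hspan : (homogeneousSubmodule (Fin (n+1)) k i).map φ = Submodule.span k (Set.range v) := by
    rw [homogeneousSubmodule_eq_finsupp_supported, AddMonoidAlgebra.supported_eq_span_single,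
      Submodule.map_span, Set.image_image]
    apply le_antisymm
    · rw [Submodule.span_le]
      rintro x ⟨d, hd, rfl⟩
      simp only [Set.mem_setOf_eq] at hd
      show φ (AddMonoidAlgebra.single d (1:k)) ∈ (Submodule.span k (Set.range v) : Set _)
      by_cases hg : IsGood ⇑d
      · apply Submodule.subset_span
        refine ⟨⟨⇑d, (mem_goodSet_iff d).mpr ⟨hd, hg⟩⟩, ?_⟩
        show Ideal.Quotient.mk I (monomial (Finsupp.equivFunOnFinite.symm ⇑d) (1:k))
          = φ (AddMonoidAlgebra.single d 1)
        rw [Finsupp.equivFunOnFinite_symm_coe, ← single_eq_monomial]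
        rfl
      · have : φ (AddMonoidAlgebra.single d (1:k)) = 0 := by
          rw [single_eq_monomial]
          show Ideal.Quotient.mk I (monomial d (1:k)) = 0
          rw [Ideal.Quotient.eq_zero_iff_mem]
          rw [hI, mem_edgeIdeal_iff]
          intro dd hdd
          rw [support_monomial, if_neg (one_ne_zero)] at hdd
          rw [Finset.mem_singleton.mp hdd]
          exact hg
        rw [this]
        exact Submodule.zero_mem _
    · rw [Submodule.span_le]
      rintro x ⟨f, rfl⟩
      apply Submodule.subset_span
      refine ⟨Finsupp.equivFunOnFinite.symm f.1, ?_, ?_⟩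
      · have := (mem_goodSet_iff (Finsupp.equivFunOnFinite.symm f.1)).mp
          (by rw [hcoe]; exact f.2)
        exact this.1
      · show φ (AddMonoidAlgebra.single (Finsupp.equivFunOnFinite.symm f.1) (1:k)) = v f
        rw [single_eq_monomial]
        rfl
  have hli : LinearIndependent k v := by
    rw [linearIndependent_iff']
    intro s g hsum f hf
    by_contra hne
    set p : MvPolynomial (Fin (n+1)) k :=
      ∑ t ∈ s, g t • monomial (Finsupp.equivFunOnFinite.symm t.1) (1:k) with hp
    have hpI : p ∈ I := by
      have hφp : φ p = 0 := by
        rw [hp, map_sum]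
        simp only [map_smul]
        exact hsum
      rwa [show φ p = Ideal.Quotient.mk I p from rfl, Ideal.Quotient.eq_zero_iff_mem] at hφp
    have hcoeff : coeff (Finsupp.equivFunOnFinite.symm f.1) p = g f := by
      rw [hp, coeff_sum]
      rw [Finset.sum_eq_single f]
      · rw [MvPolynomial.coeff_smul, MvPolynomial.coeff_monomial, if_pos rfl, smul_eq_mul, mul_one]
      · intro t _ htf
        rw [MvPolynomial.coeff_smul, MvPolynomial.coeff_monomial, if_neg, smul_eq_mul, mul_zero]
        intro h
        apply htf
        apply Subtype.ext
        have := congrArg (Finsupp.equivFunOnFinite) h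
        simpa using this
      · intro h
        exact absurd hf h
    have hmem : (Finsupp.equivFunOnFinite.symm f.1) ∈ p.support :=
      mem_support_iff.mpr (by rw [hcoeff]; exact hne)
    have := (mem_edgeIdeal_iff p).mp (by rwa [hI] at hpI) _ hmem
    apply this
    rw [hcoe]
    exact ((mem_goodSet_iff _).mp (by rw [hcoe]; exact f.2)).2
  rw [hilbertCoeff, hspan, finrank_span_eq_card hli, Fintype.card_coe]

/-- Evaluating the Hilbert series of `L_n` at `t = 1/2` yields `F_{n+2}`, where the
Fibonacci numbers are normalized by `F_0 = F_1 = 1` (so `F_m = Nat.fib (m+1)`). -/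
theorem lineSeries_eval_half (k : Type) [Field k] (n : ℕ) :
    ∑' i : ℕ, (hilbertCoeff (edgeIdeal k (lineGraph n)) i : ℝ) * (1 / 2) ^ i =
      Nat.fib (n + 3) := by
  have ceq : ∀ i : ℕ, (hilbertCoeff (edgeIdeal k (lineGraph n)) i : ℝ≥0∞)
      = ((goodSet (n+1) i).card : ℝ≥0∞) := fun i => by rw [hilbertCoeff_eq]
  have hE : ∑' i : ℕ, (hilbertCoeff (edgeIdeal k (lineGraph n)) i : ℝ≥0∞) * 2⁻¹ ^ i
      = (Nat.fib (n+3) : ℝ≥0∞) := by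
    rw [tsum_congr (fun i => by rw [ceq i]), tsum_card_eq_gsum, gsum_eq_fib,
      show n+1+2 = n+3 from rfl]
  have hne : ∀ i, (hilbertCoeff (edgeIdeal k (lineGraph n)) i : ℝ≥0∞) * 2⁻¹ ^ i ≠ ⊤ := by
    intro i
    exact ENNReal.mul_ne_top (ENNReal.natCast_ne_top _) (ENNReal.pow_ne_top (by simp))
  calc ∑' i : ℕ, (hilbertCoeff (edgeIdeal k (lineGraph n)) i : ℝ) * (1 / 2) ^ i
      = ∑' i : ℕ, ((hilbertCoeff (edgeIdeal k (lineGraph n)) i : ℝ≥0∞) * 2⁻¹ ^ i).toReal := by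
        refine tsum_congr fun i => ?_
        rw [ENNReal.toReal_mul, ENNReal.toReal_pow, ENNReal.toReal_natCast, ENNReal.toReal_inv]
        norm_num
    _ = (Nat.fib (n + 3) : ℝ) := by
        rw [← ENNReal.tsum_toReal_eq hne, hE, ENNReal.toReal_natCast]
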